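/- arXiv:1509.07999 — 2 statements merged into one kernel-verified Lean document; each statement's English description precedes it below -/
import Mathlib

section
/- Let n ≥ 2, 1 < p < ∞, and -n/p < β < n - n/p. Then the integral ∫_0^∞ ρ^{n/p} ( ∫_{S^{n-1}} |1 - ρ^β| / |ρe - θ|^n dS(θ) ) dρ/ρ is finite, where e ∈ S^{n-1} is any fixed unit vector. -/
open MeasureTheory Metric Set ENNReal

noncomputable def sphereM (n : ℕ) : Measure (sphere (0 : EuclideanSpace ℝ (Fin n)) 1) :=
  (volume : Measure (EuclideanSpace ℝ (Fin n))).toSphere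

/-- The `L^{p̃}(S^{n-1})` (extended) norm of an `ℝ≥0∞`-valued function on the unit sphere. -/
noncomputable def aNorm (n : ℕ) (pt : ℝ≥0∞) (u : sphere (0 : EuclideanSpace ℝ (Fin n)) 1 → ℝ≥0∞) : ℝ≥0∞ :=
  if pt = ∞ then essSup u (sphereM n)
  else (∫⁻ θ, (u θ) ^ pt.toReal ∂(sphereM n)) ^ (1 / pt.toReal)

/-- The mixed radial-angular norm `‖f‖_{L^p_{|x|} L^{p̃}_θ}` of an `ℝ≥0∞`-valued function. -/
noncomputable def mixedNormE (n : ℕ) (p : ℝ) (pt : ℝ≥0∞) (f : EuclideanSpace ℝ (Fin n) → ℝ≥0∞) : ℝ≥0∞ :=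
  (∫⁻ ρ in Ioi (0 : ℝ),
      (aNorm n pt (fun θ => f (ρ • (θ : EuclideanSpace ℝ (Fin n))))) ^ p
        * ENNReal.ofReal (ρ ^ ((n : ℝ) - 1))) ^ (1 / p)

/-- The mixed radial-angular norm of a complex-valued function. -/
noncomputable def mixedNorm (n : ℕ) (p : ℝ) (pt : ℝ≥0∞) (f : EuclideanSpace ℝ (Fin n) → ℂ) : ℝ≥0∞ :=
  mixedNormE n p pt (fun x => (‖f x‖₊ : ℝ≥0∞))

set_option maxHeartbeats 1000000

lemma polar_lintegral (n : ℕ) (hn : 1 ≤ n) (g : EuclideanSpace ℝ (Fin n) → ℝ≥0∞)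
    (hg : Measurable g) :
    ∫⁻ x, g x = ∫⁻ ρ in Ioi (0 : ℝ),
      (∫⁻ θ, g (ρ • (θ : EuclideanSpace ℝ (Fin n))) ∂(sphereM n))
        * ENNReal.ofReal (ρ ^ (n - 1)) := by
  have hdim : Module.finrank ℝ (EuclideanSpace ℝ (Fin n)) = n := finrank_euclideanSpace_fin
  haveI : Nontrivial (EuclideanSpace ℝ (Fin n)) :=
    Module.nontrivial_of_finrank_pos (R := ℝ) (by omega : 0 < Module.finrank ℝ (EuclideanSpace ℝ (Fin n)))
  haveI : IsFiniteMeasure (sphereM n) := by unfold sphereM; infer_instance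
  have h1 : ∫⁻ x, g x ∂(volume : Measure (EuclideanSpace ℝ (Fin n)))
      = ∫⁻ x : ({0}ᶜ : Set (EuclideanSpace ℝ (Fin n))), g x
          ∂((volume : Measure (EuclideanSpace ℝ (Fin n))).comap Subtype.val) := by
    rw [lintegral_subtype_comap (measurableSet_singleton 0).compl, restrict_compl_singleton]
  set G : sphere (0 : EuclideanSpace ℝ (Fin n)) 1 × Ioi (0 : ℝ) → ℝ≥0∞ :=
    fun y => g (y.2.1 • y.1.1) with hG
  have h2 := (Measure.measurePreserving_homeomorphUnitSphereProd
      (volume : Measure (EuclideanSpace ℝ (Fin n)))).lintegral_comp_emb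
      (Homeomorph.measurableEmbedding _) G
  have h2' : ∀ x : ({0}ᶜ : Set (EuclideanSpace ℝ (Fin n))),
      G (homeomorphUnitSphereProd (EuclideanSpace ℝ (Fin n)) x) = g x := by
    intro x
    simp only [hG, homeomorphUnitSphereProd_apply_fst_coe, homeomorphUnitSphereProd_apply_snd_coe]
    rw [smul_inv_smul₀ (norm_ne_zero_iff.2 x.2)]
  have hGm : Measurable G :=
    hg.comp (((continuous_subtype_val.comp continuous_snd).smul
      (continuous_subtype_val.comp continuous_fst)).measurable)
  have h3 := lintegral_prod_symm' G hGm
    (μ := (volume : Measure (EuclideanSpace ℝ (Fin n))).toSphere)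
    (ν := Measure.volumeIoiPow (Module.finrank ℝ (EuclideanSpace ℝ (Fin n)) - 1))
  have h4 : ∫⁻ r : Ioi (0:ℝ), (∫⁻ θ, G (θ, r) ∂(sphereM n))
        ∂(Measure.volumeIoiPow (Module.finrank ℝ (EuclideanSpace ℝ (Fin n)) - 1))
      = ∫⁻ ρ in Ioi (0 : ℝ),
          (∫⁻ θ, g (ρ • (θ : EuclideanSpace ℝ (Fin n))) ∂(sphereM n))
            * ENNReal.ofReal (ρ ^ (n - 1)) := by
    have hFm : Measurable fun r : Ioi (0:ℝ) => ∫⁻ θ, G (θ, r) ∂(sphereM n) :=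
      Measurable.lintegral_prod_right (hGm.comp measurable_swap)
    rw [Measure.volumeIoiPow, lintegral_withDensity_eq_lintegral_mul _
      ((measurable_subtype_coe.pow_const _).ennreal_ofReal) hFm, hdim]
    refine Eq.trans ?_ (lintegral_subtype_comap measurableSet_Ioi
      (fun ρ : ℝ => (∫⁻ θ, g (ρ • (θ : EuclideanSpace ℝ (Fin n))) ∂(sphereM n))
        * ENNReal.ofReal (ρ ^ (n-1))))
    exact lintegral_congr fun a => by simp [hG, mul_comm]
  rw [h1, ← lintegral_congr h2', h2, h3, ← h4]
  rfl

lemma radial_lintegral (n : ℕ) (hn : 1 ≤ n) (f : ℝ → ℝ≥0∞) (hf : Measurable f) :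
    ∫⁻ x : EuclideanSpace ℝ (Fin n), f ‖x‖
      = (sphereM n univ) * ∫⁻ ρ in Ioi (0:ℝ), f ρ * ENNReal.ofReal (ρ ^ (n-1)) := by
  haveI : IsFiniteMeasure (sphereM n) := by unfold sphereM; infer_instance
  rw [polar_lintegral n hn (fun x => f ‖x‖) (hf.comp measurable_norm)]
  rw [← lintegral_const_mul' _ _ (measure_ne_top (sphereM n) univ)]
  refine setLIntegral_congr_fun measurableSet_Ioi ?_
  intro ρ hρ
  have hθ : ∀ θ : sphere (0 : EuclideanSpace ℝ (Fin n)) 1,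
      f ‖ρ • (θ : EuclideanSpace ℝ (Fin n))‖ = f ρ := by
    intro θ
    rw [norm_smul, mem_sphere_zero_iff_norm.1 θ.2, Real.norm_eq_abs, abs_of_pos hρ, mul_one]
  beta_reduce
  rw [lintegral_congr hθ, lintegral_const]
  ring

lemma lintegral_rpow_ball (n : ℕ) (hn : 1 ≤ n) {s : ℝ} (hs : -(n:ℝ) < s) {R : ℝ} (hR : 0 < R) :
    ∫⁻ x : EuclideanSpace ℝ (Fin n) in ball 0 R, ENNReal.ofReal (‖x‖ ^ s) < ∞ := by
  haveI : IsFiniteMeasure (sphereM n) := by unfold sphereM; infer_instance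
  have hFm : Measurable ((Iio R).indicator (fun t : ℝ => ENNReal.ofReal (t ^ s))) := by
    refine Measurable.indicator ?_ measurableSet_Iio
    fun_prop
  have h0 : ∫⁻ x : EuclideanSpace ℝ (Fin n) in ball 0 R, ENNReal.ofReal (‖x‖ ^ s)
      = ∫⁻ x : EuclideanSpace ℝ (Fin n),
          (Iio R).indicator (fun t : ℝ => ENNReal.ofReal (t ^ s)) ‖x‖ := by
    rw [← lintegral_indicator measurableSet_ball]
    refine lintegral_congr fun x => ?_
    by_cases hx : x ∈ ball (0 : EuclideanSpace ℝ (Fin n)) R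
    · rw [indicator_of_mem hx, indicator_of_mem (by simpa [mem_ball_zero_iff] using hx)]
    · rw [indicator_of_notMem hx,
        indicator_of_notMem (by simpa [mem_ball_zero_iff] using hx)]
  rw [h0, radial_lintegral n hn _ hFm]
  refine ENNReal.mul_lt_top (measure_lt_top _ _) ?_
  have h1 : ∫⁻ ρ in Ioi (0:ℝ),
        (Iio R).indicator (fun t : ℝ => ENNReal.ofReal (t ^ s)) ρ * ENNReal.ofReal (ρ ^ (n-1))
      ≤ ∫⁻ ρ in Ioo (0:ℝ) R, ENNReal.ofReal (ρ ^ (s + (n-1 : ℕ))) := by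
    rw [← lintegral_indicator measurableSet_Ioo]
    refine le_trans (setLIntegral_mono' measurableSet_Ioi ?_) (setLIntegral_le_lintegral _ _)
    intro ρ hρ
    by_cases h : ρ < R
    · rw [indicator_of_mem (show ρ ∈ Iio R from h),
        indicator_of_mem (show ρ ∈ Ioo 0 R from ⟨hρ, h⟩),
        ← ENNReal.ofReal_mul (Real.rpow_nonneg (le_of_lt hρ) s)]
      refine ENNReal.ofReal_le_ofReal (le_of_eq ?_)
      rw [Real.rpow_add hρ, Real.rpow_natCast]
    · rw [indicator_of_notMem (show ρ ∉ Iio R from h), zero_mul]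
      exact zero_le
  refine lt_of_le_of_lt h1 ?_
  have hint : IntegrableOn (fun ρ : ℝ => ρ ^ (s + (n-1:ℕ))) (Ioo 0 R) := by
    rw [intervalIntegral.integrableOn_Ioo_rpow_iff hR]
    have h1n : (1:ℝ) ≤ n := by exact_mod_cast hn
    push_cast [Nat.cast_sub hn]
    linarith
  refine lt_of_le_of_lt (lintegral_ofReal_le_lintegral_enorm _) hint.2

lemma lintegral_rpow_compl (n : ℕ) (hn : 1 ≤ n) {s : ℝ} (hs : s < -(n:ℝ)) :
    ∫⁻ x : EuclideanSpace ℝ (Fin n) in (ball 0 2)ᶜ, ENNReal.ofReal (‖x‖ ^ s) < ∞ := by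
  haveI : IsFiniteMeasure (sphereM n) := by unfold sphereM; infer_instance
  have hFm : Measurable ((Iio (2:ℝ))ᶜ.indicator (fun t : ℝ => ENNReal.ofReal (t ^ s))) := by
    refine Measurable.indicator ?_ measurableSet_Iio.compl
    fun_prop
  have h0 : ∫⁻ x : EuclideanSpace ℝ (Fin n) in (ball 0 2)ᶜ, ENNReal.ofReal (‖x‖ ^ s)
      = ∫⁻ x : EuclideanSpace ℝ (Fin n),
          (Iio (2:ℝ))ᶜ.indicator (fun t : ℝ => ENNReal.ofReal (t ^ s)) ‖x‖ := by
    rw [← lintegral_indicator measurableSet_ball.compl]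
    refine lintegral_congr fun x => ?_
    by_cases hx : x ∈ (ball (0 : EuclideanSpace ℝ (Fin n)) 2)ᶜ
    · rw [indicator_of_mem hx, indicator_of_mem (by simpa [mem_ball_zero_iff] using hx)]
    · rw [indicator_of_notMem hx,
        indicator_of_notMem (by simpa [mem_ball_zero_iff] using hx)]
  rw [h0, radial_lintegral n hn _ hFm]
  refine ENNReal.mul_lt_top (measure_lt_top _ _) ?_
  have h1 : ∫⁻ ρ in Ioi (0:ℝ),
        (Iio (2:ℝ))ᶜ.indicator (fun t : ℝ => ENNReal.ofReal (t ^ s)) ρ * ENNReal.ofReal (ρ ^ (n-1))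
      ≤ ∫⁻ ρ in Ioi (1:ℝ), ENNReal.ofReal (ρ ^ (s + (n-1 : ℕ))) := by
    refine le_trans (setLIntegral_mono' measurableSet_Ioi ?_)
      (le_trans (setLIntegral_le_lintegral _ _) (le_of_eq (lintegral_indicator measurableSet_Ioi _)))
    intro ρ hρ
    by_cases h : ρ ∈ (Iio (2:ℝ))ᶜ
    · have h2 : (2:ℝ) ≤ ρ := by simpa [mem_compl_iff, mem_Iio, not_lt] using h
      rw [indicator_of_mem h, indicator_of_mem (show ρ ∈ Ioi (1:ℝ) by simp only [mem_Ioi]; linarith),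
        ← ENNReal.ofReal_mul (Real.rpow_nonneg (le_of_lt hρ) s)]
      refine ENNReal.ofReal_le_ofReal (le_of_eq ?_)
      rw [Real.rpow_add hρ, Real.rpow_natCast]
    · rw [indicator_of_notMem h, zero_mul]
      exact zero_le
  refine lt_of_le_of_lt h1 ?_
  have hint : IntegrableOn (fun ρ : ℝ => ρ ^ (s + (n-1:ℕ))) (Ioi 1) := by
    refine integrableOn_Ioi_rpow_of_lt ?_ one_pos
    have h1n : (1:ℝ) ≤ n := by exact_mod_cast hn
    push_cast [Nat.cast_sub hn]
    linarith
  refine lt_of_le_of_lt (lintegral_ofReal_le_lintegral_enorm _) hint.2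

lemma lintegral_rpow_ball_center (n : ℕ) (hn : 1 ≤ n) {s : ℝ} (hs : -(n:ℝ) < s) {R : ℝ}
    (hR : 0 < R) (c : EuclideanSpace ℝ (Fin n)) :
    ∫⁻ x : EuclideanSpace ℝ (Fin n) in ball c R, ENNReal.ofReal (‖x - c‖ ^ s) < ∞ := by
  have mp : MeasurePreserving (fun x : EuclideanSpace ℝ (Fin n) => x - c) volume volume :=
    measurePreserving_sub_right volume c
  have hpre : (fun x : EuclideanSpace ℝ (Fin n) => x - c) ⁻¹' (ball 0 R) = ball c R := by
    ext x
    simp [mem_ball, dist_eq_norm]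
  have := mp.setLIntegral_comp_preimage (measurableSet_ball (x := (0 : EuclideanSpace ℝ (Fin n))) (ε := R))
    (f := fun y : EuclideanSpace ℝ (Fin n) => ENNReal.ofReal (‖y‖ ^ s)) (by fun_prop)
  rw [hpre] at this
  rw [this]
  exact lintegral_rpow_ball n hn hs hR

lemma aux_rpow_le {t c : ℝ} (h1 : 1/2 ≤ t) (h2 : t ≤ 2) : t ^ c ≤ 2 ^ |c| := by
  rcases le_or_gt 0 c with h | h
  · rw [abs_of_nonneg h]
    exact Real.rpow_le_rpow (by linarith) h2 h
  · rw [abs_of_neg h]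
    calc t ^ c ≤ (1/2 : ℝ) ^ c := Real.rpow_le_rpow_of_nonpos (by norm_num) h1 h.le
    _ = 2 ^ (-c) := by
      rw [one_div, ← Real.rpow_neg_one 2, ← Real.rpow_mul (by norm_num : (0:ℝ) ≤ 2), neg_one_mul]
  
lemma aux_lipschitz (β : ℝ) {t : ℝ} (h1 : 1/2 ≤ t) (h2 : t ≤ 2) :
    |1 - t ^ β| ≤ (|β| * 2 ^ |β - 1|) * |t - 1| := by
  have key := Convex.norm_image_sub_le_of_norm_hasDerivWithin_le
    (f := fun u : ℝ => u ^ β) (f' := fun u : ℝ => β * u ^ (β - 1)) (s := Icc (1/2:ℝ) 2)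
    (fun u hu => (Real.hasDerivAt_rpow_const
      (Or.inl (by rcases hu with ⟨hu1, _⟩; positivity))).hasDerivWithinAt)
    (fun u hu => by
      rw [Real.norm_eq_abs, abs_mul, abs_of_nonneg (Real.rpow_nonneg (by linarith [hu.1]) _)]
      exact mul_le_mul_of_nonneg_left (aux_rpow_le hu.1 hu.2) (abs_nonneg β))
    (convex_Icc _ _) (show (1:ℝ) ∈ Icc (1/2:ℝ) 2 by norm_num)
    (show t ∈ Icc (1/2:ℝ) 2 from ⟨h1, h2⟩)
  simp only [Real.one_rpow, Real.norm_eq_abs] at key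
  calc |1 - t ^ β| = |t ^ β - 1| := abs_sub_comm _ _
  _ ≤ _ := key

/-- The kernel integral `∫_0^∞ ρ^{n/p} ∫_{S^{n-1}} |1-ρ^β| / |ρe-θ|^n dS(θ) dρ/ρ`
is finite for `1 < p < ∞` and `-n/p < β < n - n/p`. -/
theorem kernel_integral_finite
    (n : ℕ) (hn : 2 ≤ n) (p β : ℝ) (hp : 1 < p)
    (hβ₁ : -((n : ℝ) / p) < β) (hβ₂ : β < (n : ℝ) - (n : ℝ) / p)
    (e : EuclideanSpace ℝ (Fin n)) (he : ‖e‖ = 1) :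
    ∫⁻ ρ in Ioi (0 : ℝ),
        ENNReal.ofReal (ρ ^ ((n : ℝ) / p)) *
          (∫⁻ θ, ENNReal.ofReal
              (|1 - ρ ^ β| / ‖ρ • e - (θ : EuclideanSpace ℝ (Fin n))‖ ^ n) ∂(sphereM n)) *
          ENNReal.ofReal ρ⁻¹ < ∞ := by
  have hn' : 1 ≤ n := by omega
  have hp0 : (0:ℝ) < p := lt_trans one_pos hp
  have hnpos : (0:ℝ) < n := by
    have : (2:ℝ) ≤ n := by exact_mod_cast hn
    linarith
  have hdivpos : 0 < (n:ℝ)/p := div_pos hnpos hp0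
  set a : ℝ := (n:ℝ)/p - n with ha
  have ha1 : -(n:ℝ) < a := by rw [ha]; linarith
  have ha0 : a < 0 := by
    rw [ha]
    have := div_lt_self hnpos hp
    linarith
  have haβ : -(n:ℝ) < a + β := by rw [ha]; linarith
  have h3a : a - n < -(n:ℝ) := by linarith
  have h3b : a + β - n < -(n:ℝ) := by rw [ha]; linarith
  set g₀ : EuclideanSpace ℝ (Fin n) → ℝ≥0∞ :=
    fun x => ENNReal.ofReal (‖x‖ ^ a * (|1 - ‖x‖ ^ β| / ‖x - e‖ ^ n)) with hg₀
  have hg₀m : Measurable g₀ := by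
    rw [hg₀]; fun_prop
  -- the norm swap identity
  have hswap : ∀ (ρ : ℝ) (θ : sphere (0 : EuclideanSpace ℝ (Fin n)) 1),
      ‖ρ • (θ : EuclideanSpace ℝ (Fin n)) - e‖ = ‖ρ • e - (θ : EuclideanSpace ℝ (Fin n))‖ := by
    intro ρ θ
    have hθ : ‖(θ : EuclideanSpace ℝ (Fin n))‖ = 1 := mem_sphere_zero_iff_norm.1 θ.2
    have h1 : ‖ρ • (θ : EuclideanSpace ℝ (Fin n)) - e‖ ^ 2
        = ‖ρ • e - (θ : EuclideanSpace ℝ (Fin n))‖ ^ 2 := by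
      rw [norm_sub_sq_real, norm_sub_sq_real, norm_smul, norm_smul, he, hθ,
        real_inner_smul_left, real_inner_smul_left, real_inner_comm]
    nlinarith [norm_nonneg (ρ • (θ : EuclideanSpace ℝ (Fin n)) - e),
      norm_nonneg (ρ • e - (θ : EuclideanSpace ℝ (Fin n)))]
  -- step A : the target integral equals ∫⁻ g₀
  have hstep : (∫⁻ ρ in Ioi (0 : ℝ),
        ENNReal.ofReal (ρ ^ ((n : ℝ) / p)) *
          (∫⁻ θ, ENNReal.ofReal
              (|1 - ρ ^ β| / ‖ρ • e - (θ : EuclideanSpace ℝ (Fin n))‖ ^ n) ∂(sphereM n)) *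
          ENNReal.ofReal ρ⁻¹) = ∫⁻ x, g₀ x := by
    rw [polar_lintegral n hn' g₀ hg₀m]
    refine setLIntegral_congr_fun measurableSet_Ioi ?_
    intro ρ hρ
    have hρ0 : (0:ℝ) < ρ := hρ
    have hθeq : ∀ θ : sphere (0 : EuclideanSpace ℝ (Fin n)) 1,
        g₀ (ρ • (θ : EuclideanSpace ℝ (Fin n)))
        = ENNReal.ofReal (ρ ^ a) * ENNReal.ofReal
            (|1 - ρ ^ β| / ‖ρ • e - (θ : EuclideanSpace ℝ (Fin n))‖ ^ n) := by
      intro θ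
      have hθ : ‖(θ : EuclideanSpace ℝ (Fin n))‖ = 1 := mem_sphere_zero_iff_norm.1 θ.2
      have hnrm : ‖ρ • (θ : EuclideanSpace ℝ (Fin n))‖ = ρ := by
        rw [norm_smul, hθ, Real.norm_eq_abs, abs_of_pos hρ0, mul_one]
      simp only [hg₀]
      rw [hnrm, hswap ρ θ, ENNReal.ofReal_mul (Real.rpow_nonneg hρ0.le a)]
    beta_reduce
    rw [lintegral_congr hθeq, lintegral_const_mul' _ _ ENNReal.ofReal_ne_top]
    have hconst : ENNReal.ofReal (ρ ^ ((n:ℝ)/p)) * ENNReal.ofReal ρ⁻¹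
        = ENNReal.ofReal (ρ ^ a) * ENNReal.ofReal (ρ ^ (n-1 : ℕ)) := by
      rw [← ENNReal.ofReal_mul (Real.rpow_nonneg hρ0.le _),
        ← ENNReal.ofReal_mul (Real.rpow_nonneg hρ0.le a)]
      congr 1
      rw [← Real.rpow_neg_one ρ, ← Real.rpow_add hρ0, ← Real.rpow_natCast ρ (n-1),
        ← Real.rpow_add hρ0]
      congr 1
      have hc : ((n-1 : ℕ) : ℝ) = (n:ℝ) - 1 := by
        push_cast [Nat.cast_sub hn']
        ring
      rw [hc, ha]
      ring
    calc ENNReal.ofReal (ρ ^ ((n:ℝ)/p))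
          * (∫⁻ θ, ENNReal.ofReal
              (|1 - ρ ^ β| / ‖ρ • e - (θ : EuclideanSpace ℝ (Fin n))‖ ^ n) ∂(sphereM n))
          * ENNReal.ofReal ρ⁻¹
        = (ENNReal.ofReal (ρ ^ ((n:ℝ)/p)) * ENNReal.ofReal ρ⁻¹)
          * (∫⁻ θ, ENNReal.ofReal
              (|1 - ρ ^ β| / ‖ρ • e - (θ : EuclideanSpace ℝ (Fin n))‖ ^ n) ∂(sphereM n)) := by
          ring
      _ = (ENNReal.ofReal (ρ ^ a) * ENNReal.ofReal (ρ ^ (n-1 : ℕ)))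
          * (∫⁻ θ, ENNReal.ofReal
              (|1 - ρ ^ β| / ‖ρ • e - (θ : EuclideanSpace ℝ (Fin n))‖ ^ n) ∂(sphereM n)) := by
          rw [hconst]
      _ = ENNReal.ofReal (ρ ^ a)
          * (∫⁻ θ, ENNReal.ofReal
              (|1 - ρ ^ β| / ‖ρ • e - (θ : EuclideanSpace ℝ (Fin n))‖ ^ n) ∂(sphereM n))
          * ENNReal.ofReal (ρ ^ (n-1 : ℕ)) := by
          ring
  rw [hstep]
  -- finiteness of the Euclidean integral
  set s1 : Set (EuclideanSpace ℝ (Fin n)) := ball 0 (1/2) with hs1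
  set s2 : Set (EuclideanSpace ℝ (Fin n)) := ball e (1/2) with hs2
  set s3 : Set (EuclideanSpace ℝ (Fin n)) := (ball 0 2)ᶜ with hs3
  set s4 : Set (EuclideanSpace ℝ (Fin n)) := closedBall 0 2 \ (ball 0 (1/2) ∪ ball e (1/2))
    with hs4
  have hcover : ∀ x : EuclideanSpace ℝ (Fin n), x ∈ ((s1 ∪ s2) ∪ s3) ∪ s4 := by
    intro x
    rcases em (x ∈ s1) with h1 | h1
    · exact Or.inl (Or.inl (Or.inl h1))
    rcases em (x ∈ s2) with h2 | h2
    · exact Or.inl (Or.inl (Or.inr h2))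
    rcases em (x ∈ ball (0 : EuclideanSpace ℝ (Fin n)) 2) with h3 | h3
    · refine Or.inr ⟨ball_subset_closedBall h3, ?_⟩
      rw [mem_union]
      push_neg
      exact ⟨h1, h2⟩
    · exact Or.inl (Or.inr h3)
  have hb1 : ∫⁻ x in s1, g₀ x < ∞ := by
    have hle : ∀ x ∈ s1, g₀ x ≤ ENNReal.ofReal ((2:ℝ)^n)
        * (ENNReal.ofReal (‖x‖ ^ a) + ENNReal.ofReal (‖x‖ ^ (a+β))) := by
      intro x hx
      have hxn : ‖x‖ < 1/2 := mem_ball_zero_iff.1 hx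
      have hxe : (1:ℝ)/2 ≤ ‖x - e‖ := by
        have h := norm_sub_norm_le e x
        rw [he, norm_sub_rev e x] at h
        linarith
      have hreal : ‖x‖ ^ a * (|1 - ‖x‖ ^ β| / ‖x - e‖ ^ n)
          ≤ (2:ℝ)^n * (‖x‖ ^ a + ‖x‖ ^ (a+β)) := by
        by_cases hx0 : x = 0
        · rw [hx0, norm_zero, Real.zero_rpow (ne_of_lt ha0), zero_mul]
          positivity
        · have hx0' : 0 < ‖x‖ := norm_pos_iff.2 hx0
          have h1 : |1 - ‖x‖ ^ β| ≤ 1 + ‖x‖ ^ β := by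
            calc |1 - ‖x‖ ^ β| ≤ |1| + |‖x‖ ^ β| := abs_sub _ _
            _ = 1 + ‖x‖ ^ β := by
              rw [abs_one, abs_of_nonneg (Real.rpow_nonneg (norm_nonneg x) β)]
          have h2 : (1:ℝ)/‖x - e‖^n ≤ (2:ℝ)^n := by
            have hpow : ((1:ℝ)/2)^n ≤ ‖x - e‖^n :=
              pow_le_pow_left₀ (by norm_num) hxe n
            have h3 : (1:ℝ)/‖x - e‖^n ≤ 1/(((1:ℝ)/2)^n) :=
              one_div_le_one_div_of_le (by positivity) hpow
            have h4 : (1:ℝ)/(((1:ℝ)/2)^n) = (2:ℝ)^n := by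
              rw [div_pow, one_pow, one_div_one_div]
            linarith
          calc ‖x‖ ^ a * (|1 - ‖x‖ ^ β| / ‖x - e‖ ^ n)
              = ‖x‖ ^ a * (|1 - ‖x‖ ^ β| * (1/‖x - e‖ ^ n)) := by ring
            _ ≤ ‖x‖ ^ a * ((1 + ‖x‖ ^ β) * (2:ℝ)^n) := by
                refine mul_le_mul_of_nonneg_left
                  (mul_le_mul h1 h2 (by positivity) (by positivity))
                  (Real.rpow_nonneg (norm_nonneg x) a)
            _ = (2:ℝ)^n * (‖x‖ ^ a + ‖x‖ ^ a * ‖x‖ ^ β) := by ring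
            _ = (2:ℝ)^n * (‖x‖ ^ a + ‖x‖ ^ (a+β)) := by
                rw [← Real.rpow_add hx0']
      calc g₀ x ≤ ENNReal.ofReal ((2:ℝ)^n * (‖x‖ ^ a + ‖x‖ ^ (a+β))) :=
            ENNReal.ofReal_le_ofReal hreal
        _ = ENNReal.ofReal ((2:ℝ)^n)
            * (ENNReal.ofReal (‖x‖ ^ a) + ENNReal.ofReal (‖x‖ ^ (a+β))) := by
          rw [ENNReal.ofReal_mul (by positivity), ENNReal.ofReal_add (by positivity) (by positivity)]
    refine lt_of_le_of_lt (setLIntegral_mono' measurableSet_ball hle) ?_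
    rw [lintegral_const_mul' _ _ ENNReal.ofReal_ne_top, lintegral_add_left (by fun_prop)]
    exact ENNReal.mul_lt_top ENNReal.ofReal_lt_top
      (ENNReal.add_lt_top.2 ⟨lintegral_rpow_ball n hn' ha1 (by norm_num),
        lintegral_rpow_ball n hn' haβ (by norm_num)⟩)
  have hb2 : ∫⁻ x in s2, g₀ x < ∞ := by
    have hle : ∀ x ∈ s2, g₀ x ≤ ENNReal.ofReal ((2:ℝ)^|a| * (|β| * 2^|β-1|))
        * ENNReal.ofReal (‖x - e‖ ^ ((1:ℝ) - n)) := by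
      intro x hx
      have hxe : ‖x - e‖ < 1/2 := by
        rw [hs2, mem_ball, dist_eq_norm] at hx
        exact hx
      have habs : |‖x‖ - 1| ≤ ‖x - e‖ := by
        have := abs_norm_sub_norm_le x e
        rwa [he] at this
      have habs' := abs_le.1 habs
      have ht1 : 1/2 ≤ ‖x‖ := by linarith [habs'.1]
      have ht2 : ‖x‖ ≤ 2 := by linarith [habs'.2]
      have hreal : ‖x‖ ^ a * (|1 - ‖x‖ ^ β| / ‖x - e‖ ^ n)
          ≤ ((2:ℝ)^|a| * (|β| * 2^|β-1|)) * ‖x - e‖ ^ ((1:ℝ) - n) := by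
        by_cases hxe0 : x = e
        · rw [hxe0, sub_self, norm_zero, he, Real.one_rpow, Real.one_rpow, sub_self, abs_zero,
            zero_div, mul_zero]
          positivity
        · have hre : 0 < ‖x - e‖ := norm_pos_iff.2 (sub_ne_zero.2 hxe0)
          have hnum : ‖x‖ ^ a * |1 - ‖x‖ ^ β|
              ≤ (2:ℝ)^|a| * ((|β| * 2^|β-1|) * ‖x - e‖) := by
            refine mul_le_mul (aux_rpow_le ht1 ht2) ?_ (abs_nonneg _) (by positivity)
            refine le_trans (aux_lipschitz β ht1 ht2) ?_
            exact mul_le_mul_of_nonneg_left habs (by positivity)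
          calc ‖x‖ ^ a * (|1 - ‖x‖ ^ β| / ‖x - e‖ ^ n)
              = (‖x‖ ^ a * |1 - ‖x‖ ^ β|) / ‖x - e‖ ^ n := by ring
            _ ≤ ((2:ℝ)^|a| * ((|β| * 2^|β-1|) * ‖x - e‖)) / ‖x - e‖ ^ n := by
                refine div_le_div_of_nonneg_right hnum (by positivity)
            _ = ((2:ℝ)^|a| * (|β| * 2^|β-1|)) * (‖x - e‖ / ‖x - e‖ ^ n) := by ring
            _ = ((2:ℝ)^|a| * (|β| * 2^|β-1|)) * ‖x - e‖ ^ ((1:ℝ) - n) := by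
                rw [Real.rpow_sub hre, Real.rpow_one, Real.rpow_natCast]
      calc g₀ x ≤ ENNReal.ofReal (((2:ℝ)^|a| * (|β| * 2^|β-1|)) * ‖x - e‖ ^ ((1:ℝ) - n)) :=
            ENNReal.ofReal_le_ofReal hreal
        _ = _ := ENNReal.ofReal_mul (by positivity)
    refine lt_of_le_of_lt (setLIntegral_mono' measurableSet_ball hle) ?_
    rw [lintegral_const_mul' _ _ ENNReal.ofReal_ne_top]
    refine ENNReal.mul_lt_top ENNReal.ofReal_lt_top ?_
    exact lintegral_rpow_ball_center n hn' (by linarith : -(n:ℝ) < (1:ℝ) - n) (by norm_num) e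
  have hb3 : ∫⁻ x in s3, g₀ x < ∞ := by
    have hle : ∀ x ∈ s3, g₀ x ≤ ENNReal.ofReal ((2:ℝ)^n)
        * (ENNReal.ofReal (‖x‖ ^ (a-n)) + ENNReal.ofReal (‖x‖ ^ (a+β-n))) := by
      intro x hx
      have hx2 : (2:ℝ) ≤ ‖x‖ := by
        rw [hs3, mem_compl_iff, mem_ball_zero_iff, not_lt] at hx
        exact hx
      have hx0' : (0:ℝ) < ‖x‖ := by linarith
      have hxe : ‖x‖/2 ≤ ‖x - e‖ := by
        have h := norm_sub_norm_le x e
        rw [he] at h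
        linarith
      have h1 : |1 - ‖x‖ ^ β| ≤ 1 + ‖x‖ ^ β := by
        calc |1 - ‖x‖ ^ β| ≤ |1| + |‖x‖ ^ β| := abs_sub _ _
        _ = 1 + ‖x‖ ^ β := by
          rw [abs_one, abs_of_nonneg (Real.rpow_nonneg (norm_nonneg x) β)]
      have h2 : (1:ℝ)/‖x - e‖^n ≤ (2:ℝ)^n / ‖x‖^n := by
        have hpow : (‖x‖/2)^n ≤ ‖x - e‖^n := pow_le_pow_left₀ (by positivity) hxe n
        have h3 : (1:ℝ)/‖x - e‖^n ≤ 1/((‖x‖/2)^n) :=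
          one_div_le_one_div_of_le (by positivity) hpow
        have h4 : (1:ℝ)/((‖x‖/2)^n) = (2:ℝ)^n / ‖x‖^n := by
          rw [div_pow]
          rw [one_div_div]
        linarith
      have hreal : ‖x‖ ^ a * (|1 - ‖x‖ ^ β| / ‖x - e‖ ^ n)
          ≤ (2:ℝ)^n * (‖x‖ ^ (a-n) + ‖x‖ ^ (a+β-n)) := by
        calc ‖x‖ ^ a * (|1 - ‖x‖ ^ β| / ‖x - e‖ ^ n)
            = ‖x‖ ^ a * (|1 - ‖x‖ ^ β| * (1/‖x - e‖ ^ n)) := by ring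
          _ ≤ ‖x‖ ^ a * ((1 + ‖x‖ ^ β) * ((2:ℝ)^n / ‖x‖^n)) := by
              refine mul_le_mul_of_nonneg_left
                (mul_le_mul h1 h2 (by positivity) (by positivity))
                (Real.rpow_nonneg (norm_nonneg x) a)
          _ = (2:ℝ)^n * (‖x‖ ^ a / ‖x‖^n + (‖x‖ ^ a * ‖x‖ ^ β) / ‖x‖^n) := by ring
          _ = (2:ℝ)^n * (‖x‖ ^ (a-n) + ‖x‖ ^ (a+β-n)) := by
              rw [← Real.rpow_add hx0', ← Real.rpow_natCast ‖x‖ n, ← Real.rpow_sub hx0',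
                ← Real.rpow_sub hx0']
      calc g₀ x ≤ ENNReal.ofReal ((2:ℝ)^n * (‖x‖ ^ (a-n) + ‖x‖ ^ (a+β-n))) :=
            ENNReal.ofReal_le_ofReal hreal
        _ = ENNReal.ofReal ((2:ℝ)^n)
            * (ENNReal.ofReal (‖x‖ ^ (a-n)) + ENNReal.ofReal (‖x‖ ^ (a+β-n))) := by
          rw [ENNReal.ofReal_mul (by positivity), ENNReal.ofReal_add (by positivity) (by positivity)]
    refine lt_of_le_of_lt (setLIntegral_mono' measurableSet_ball.compl hle) ?_
    rw [lintegral_const_mul' _ _ ENNReal.ofReal_ne_top, lintegral_add_left (by fun_prop)]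
    exact ENNReal.mul_lt_top ENNReal.ofReal_lt_top
      (ENNReal.add_lt_top.2 ⟨lintegral_rpow_compl n hn' h3a, lintegral_rpow_compl n hn' h3b⟩)
  have hb4 : ∫⁻ x in s4, g₀ x < ∞ := by
    have hle : ∀ x ∈ s4, g₀ x
        ≤ ENNReal.ofReal ((2:ℝ)^|a| * ((1 + 2^|β|) * 2^n)) := by
      intro x hx
      rw [hs4, mem_diff, mem_union] at hx
      push_neg at hx
      obtain ⟨hxc, hx1, hx2⟩ := hx
      have ht2 : ‖x‖ ≤ 2 := mem_closedBall_zero_iff.1 hxc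
      have ht1 : 1/2 ≤ ‖x‖ := by
        rw [mem_ball_zero_iff, not_lt] at hx1
        exact hx1
      have hxe : 1/2 ≤ ‖x - e‖ := by
        rw [mem_ball, dist_eq_norm, not_lt] at hx2
        exact hx2
      have h2 : (1:ℝ)/‖x - e‖^n ≤ (2:ℝ)^n := by
        have hpow : ((1:ℝ)/2)^n ≤ ‖x - e‖^n := pow_le_pow_left₀ (by norm_num) hxe n
        have h3 : (1:ℝ)/‖x - e‖^n ≤ 1/(((1:ℝ)/2)^n) :=
          one_div_le_one_div_of_le (by positivity) hpow
        have h4 : (1:ℝ)/(((1:ℝ)/2)^n) = (2:ℝ)^n := by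
          rw [div_pow, one_pow, one_div_one_div]
        linarith
      have h1 : |1 - ‖x‖ ^ β| ≤ 1 + 2^|β| := by
        calc |1 - ‖x‖ ^ β| ≤ |1| + |‖x‖ ^ β| := abs_sub _ _
        _ = 1 + ‖x‖ ^ β := by
          rw [abs_one, abs_of_nonneg (Real.rpow_nonneg (norm_nonneg x) β)]
        _ ≤ 1 + 2^|β| := by linarith [aux_rpow_le ht1 ht2 (c := β)]
      have hreal : ‖x‖ ^ a * (|1 - ‖x‖ ^ β| / ‖x - e‖ ^ n)
          ≤ (2:ℝ)^|a| * ((1 + 2^|β|) * 2^n) := by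
        calc ‖x‖ ^ a * (|1 - ‖x‖ ^ β| / ‖x - e‖ ^ n)
            = ‖x‖ ^ a * (|1 - ‖x‖ ^ β| * (1/‖x - e‖ ^ n)) := by ring
          _ ≤ (2:ℝ)^|a| * ((1 + 2^|β|) * 2^n) := by
              refine mul_le_mul (aux_rpow_le ht1 ht2)
                (mul_le_mul h1 h2 (by positivity) (by positivity))
                (by positivity) (by positivity)
      exact ENNReal.ofReal_le_ofReal hreal
    have hms4 : MeasurableSet s4 :=
      measurableSet_closedBall.diff (measurableSet_ball.union measurableSet_ball)
    refine lt_of_le_of_lt (setLIntegral_mono' hms4 hle) ?_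
    rw [setLIntegral_const]
    refine ENNReal.mul_lt_top ENNReal.ofReal_lt_top ?_
    exact lt_of_le_of_lt (measure_mono (diff_subset.trans (subset_refl _)))
      measure_closedBall_lt_top
  calc ∫⁻ x, g₀ x = ∫⁻ x in univ, g₀ x := by rw [Measure.restrict_univ]
    _ ≤ ∫⁻ x in ((s1 ∪ s2) ∪ s3) ∪ s4, g₀ x :=
        lintegral_mono_set (fun x _ => hcover x)
    _ ≤ (∫⁻ x in (s1 ∪ s2) ∪ s3, g₀ x) + ∫⁻ x in s4, g₀ x := lintegral_union_le _ _ _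
    _ ≤ ((∫⁻ x in s1 ∪ s2, g₀ x) + ∫⁻ x in s3, g₀ x) + ∫⁻ x in s4, g₀ x :=
        add_le_add_left (lintegral_union_le _ _ _) _
    _ ≤ (((∫⁻ x in s1, g₀ x) + ∫⁻ x in s2, g₀ x) + ∫⁻ x in s3, g₀ x) + ∫⁻ x in s4, g₀ x :=
        add_le_add_left (add_le_add_left (lintegral_union_le _ _ _) _) _
    _ < ∞ := by
        refine ENNReal.add_lt_top.2 ⟨?_, hb4⟩
        refine ENNReal.add_lt_top.2 ⟨?_, hb3⟩
        exact ENNReal.add_lt_top.2 ⟨hb1, hb2⟩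
end

section
/- Let n ≥ 2 and let e ∈ S^{n-1} be a fixed unit vector. Then there exist constants c, C > 0 depending only on n such that for all ρ ∈ [1/2, 2] with ρ ≠ 1, c/|1-ρ| ≤ ∫_{S^{n-1}} |ρe - θ|^{-n} dS(θ) ≤ C/|1-ρ|. -/
open MeasureTheory Metric Set ENNReal

open Module
open scoped Pointwise RealInnerProductSpace


lemma slab_volume (m : ℕ) (e : EuclideanSpace ℝ (Fin (m+1))) (he : ‖e‖ = 1)
    (a b s : ℝ) (hs : 0 ≤ s) :
    volume {x : EuclideanSpace ℝ (Fin (m+1)) |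
        ⟪x, e⟫ ∈ Icc a b ∧ ‖x - ⟪x, e⟫ • e‖ ≤ s}
      = ENNReal.ofReal (b - a) *
          (ENNReal.ofReal (s ^ m) * volume (ball (0 : EuclideanSpace ℝ (Fin m)) 1)) := by
  classical
  -- orthonormal basis with b₀ 0 = e
  obtain ⟨b₀, hb₀⟩ : ∃ b₀ : OrthonormalBasis (Fin (m+1)) ℝ (EuclideanSpace ℝ (Fin (m+1))),
      b₀ 0 = e := by
    have card : finrank ℝ (EuclideanSpace ℝ (Fin (m+1))) = Fintype.card (Fin (m+1)) := by
      simp [finrank_euclideanSpace_fin]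
    have horth : Orthonormal ℝ (({0} : Set (Fin (m+1))).restrict
        (fun _ : Fin (m+1) => e)) := by
      rw [orthonormal_iff_ite]
      intro i j
      have hij : i = j := Subsingleton.elim i j
      subst hij
      rw [if_pos rfl]
      show ⟪e, e⟫ = 1
      rw [real_inner_self_eq_norm_sq, he, one_pow]
    obtain ⟨b₀, hb⟩ := horth.exists_orthonormalBasis_extension_of_card_eq card
    exact ⟨b₀, hb 0 rfl⟩
  set φ := b₀.repr with hφdef
  have hφ : MeasurePreserving φ volume volume := b₀.measurePreserving_repr
  have hψ := EuclideanSpace.volume_preserving_symm_measurableEquiv_toLp (Fin (m+1))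
  have hπ := volume_preserving_piFinSuccAbove (fun _ : Fin (m+1) => ℝ) 0
  have hψm := EuclideanSpace.volume_preserving_symm_measurableEquiv_toLp (Fin m)
  set ψ := (MeasurableEquiv.toLp 2 (Fin (m+1) → ℝ)).symm
  set π := MeasurableEquiv.piFinSuccAbove (fun _ : Fin (m+1) => ℝ) 0
  set ψm := (MeasurableEquiv.toLp 2 (Fin m → ℝ)).symm
  set Z : Set (Fin m → ℝ) := ψm.symm ⁻¹' (closedBall 0 s) with hZdef
  have hkey : {x : EuclideanSpace ℝ (Fin (m+1)) |
        ⟪x, e⟫ ∈ Icc a b ∧ ‖x - ⟪x, e⟫ • e‖ ≤ s}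
      = (⇑π ∘ ⇑ψ ∘ ⇑φ) ⁻¹' ((Icc a b) ×ˢ Z) := by
    ext x
    have h1 : ⟪x, e⟫ = φ x 0 := by
      have : ⟪x, e⟫ = ⟪φ x, φ e⟫ := (φ.inner_map_map x e).symm
      rw [this, ← hb₀, hφdef, OrthonormalBasis.repr_self,
        EuclideanSpace.inner_single_right]
      simp
    set y := φ x with hy
    have hfst : (π (ψ y)).1 = y 0 := rfl
    have hsnd : (π (ψ y)).2 = fun j : Fin m => y j.succ := by
      funext j
      show (ψ y) (Fin.succAbove 0 j) = _
      rw [Fin.zero_succAbove]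
      rfl
    have hnorm : ‖x - ⟪x, e⟫ • e‖
        = ‖(ψm.symm (fun j : Fin m => y j.succ) : EuclideanSpace ℝ (Fin m))‖ := by
      rw [← φ.norm_map (x - ⟪x, e⟫ • e)]
      have hφe : φ e = EuclideanSpace.single 0 1 := by
        rw [← hb₀]; exact b₀.repr_self 0
      have hmap : φ (x - ⟪x, e⟫ • e) = y - (y 0) • EuclideanSpace.single 0 1 := by
        rw [map_sub, LinearIsometryEquiv.map_smul, hφe, h1]
      rw [hmap, EuclideanSpace.norm_eq, EuclideanSpace.norm_eq]
      congr 1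
      rw [Fin.sum_univ_succ]
      have h0 : (y - y 0 • EuclideanSpace.single 0 (1:ℝ)
          : EuclideanSpace ℝ (Fin (m+1))) 0 = 0 := by
        simp [EuclideanSpace.single_apply]
      have hsu : ∀ j : Fin m, (y - y 0 • EuclideanSpace.single 0 (1:ℝ)
          : EuclideanSpace ℝ (Fin (m+1))) j.succ = y j.succ := by
        intro j
        simp [EuclideanSpace.single_apply, Fin.succ_ne_zero]
      rw [h0]
      simp only [hsu]
      have : ∀ j : Fin m, ‖(ψm.symm (fun j : Fin m => y j.succ)
          : EuclideanSpace ℝ (Fin m)) j‖ = ‖y j.succ‖ := fun j => rfl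
      simp [this]
    constructor
    · rintro ⟨hIcc, hball⟩
      refine ⟨?_, ?_⟩
      · show (π (ψ y)).1 ∈ Icc a b
        rw [hfst, ← h1]; exact hIcc
      · show (π (ψ y)).2 ∈ Z
        rw [hZdef]
        rw [Set.mem_preimage, hsnd, mem_closedBall_zero_iff]
        rw [← hnorm]; exact hball
    · rintro ⟨hIcc, hZm⟩
      have hIcc' : (π (ψ y)).1 ∈ Icc a b := hIcc
      have hZm' : (π (ψ y)).2 ∈ Z := hZm
      rw [hfst] at hIcc'
      rw [hZdef, Set.mem_preimage, hsnd, mem_closedBall_zero_iff, ← hnorm] at hZm'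
      exact ⟨h1 ▸ hIcc', hZm'⟩
  rw [hkey, (hπ.comp (hψ.comp hφ)).measure_preimage
      (measurableSet_Icc.prod (ψm.symm.measurable measurableSet_closedBall)).nullMeasurableSet]
  rw [Measure.volume_eq_prod, Measure.prod_prod, Real.volume_Icc]
  congr 1
  rw [(hψm.symm _).measure_preimage measurableSet_closedBall.nullMeasurableSet,
    Measure.addHaar_closedBall _ _ hs, finrank_euclideanSpace_fin]

instance sphereM_finite (n : ℕ) : IsFiniteMeasure (sphereM n) := by
  unfold sphereM; infer_instance

lemma proj_orth {m : ℕ} (e w : EuclideanSpace ℝ (Fin m)) (he : ‖e‖ = 1) :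
    ⟪w - ⟪w, e⟫ • e, e⟫ = 0 := by
  rw [inner_sub_left, real_inner_smul_left, real_inner_self_eq_norm_sq, he]
  ring

lemma proj_norm_le {m : ℕ} (e w : EuclideanSpace ℝ (Fin m)) (he : ‖e‖ = 1) :
    ‖w - ⟪w, e⟫ • e‖ ≤ ‖w - e‖ := by
  have horth : ⟪w - ⟪w, e⟫ • e, (⟪w, e⟫ - 1) • e⟫ = 0 := by
    rw [real_inner_smul_right, proj_orth e w he, mul_zero]
  have hsum : (w - ⟪w, e⟫ • e) + (⟪w, e⟫ - 1) • e = w - e := by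
    rw [sub_smul, one_smul]
    abel
  have h := norm_add_sq_eq_norm_sq_add_norm_sq_real horth
  rw [hsum] at h
  nlinarith [norm_nonneg (w - ⟪w, e⟫ • e), norm_nonneg (w - e),
    sq_nonneg ‖(⟪w, e⟫ - 1) • e‖]

lemma cap_measurable (m : ℕ) (e : EuclideanSpace ℝ (Fin (m+1))) (r : ℝ) :
    MeasurableSet {θ : sphere (0 : EuclideanSpace ℝ (Fin (m+1))) 1 |
      ‖(θ : EuclideanSpace ℝ (Fin (m+1))) - e‖ ≤ r} :=
  (isClosed_le (Continuous.norm (continuous_subtype_val.sub continuous_const))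
    continuous_const).measurableSet

lemma cap_upper (m : ℕ) (e : EuclideanSpace ℝ (Fin (m+1))) (he : ‖e‖ = 1)
    (r : ℝ) (hr : 0 ≤ r) :
    sphereM (m+1) {θ : sphere (0 : EuclideanSpace ℝ (Fin (m+1))) 1 |
        ‖(θ : EuclideanSpace ℝ (Fin (m+1))) - e‖ ≤ r}
      ≤ ((m+1 : ℕ) : ℝ≥0∞) * (ENNReal.ofReal 2 *
          (ENNReal.ofReal (r ^ m) * volume (ball (0 : EuclideanSpace ℝ (Fin m)) 1))) := by
  rw [sphereM, Measure.toSphere_apply' _ (cap_measurable m e r), finrank_euclideanSpace_fin]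
  refine mul_le_mul_right ?_ _
  have hsub : Ioo (0:ℝ) 1 • ((↑) '' {θ : sphere (0 : EuclideanSpace ℝ (Fin (m+1))) 1 |
        ‖(θ : EuclideanSpace ℝ (Fin (m+1))) - e‖ ≤ r})
      ⊆ {x : EuclideanSpace ℝ (Fin (m+1)) |
          ⟪x, e⟫ ∈ Icc (-1 : ℝ) 1 ∧ ‖x - ⟪x, e⟫ • e‖ ≤ r} := by
    rintro x hx
    rw [Set.mem_smul] at hx
    obtain ⟨c, hc, v, hv, rfl⟩ := hx
    obtain ⟨θ, hθ, rfl⟩ := hv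
    have hθn : ‖(θ : EuclideanSpace ℝ (Fin (m+1)))‖ = 1 :=
      mem_sphere_zero_iff_norm.1 θ.2
    have ht : |⟪(θ : EuclideanSpace ℝ (Fin (m+1))), e⟫| ≤ 1 := by
      have := abs_real_inner_le_norm (θ : EuclideanSpace ℝ (Fin (m+1))) e
      rwa [hθn, he, one_mul] at this
    have hinner : ⟪c • (θ : EuclideanSpace ℝ (Fin (m+1))), e⟫
        = c * ⟪(θ : EuclideanSpace ℝ (Fin (m+1))), e⟫ := real_inner_smul_left _ _ _
    constructor
    · rw [hinner]
      have : |c * ⟪(θ : EuclideanSpace ℝ (Fin (m+1))), e⟫| ≤ 1 := by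
        rw [abs_mul]
        have hcabs : |c| ≤ 1 := by
          rw [abs_of_pos hc.1]; exact hc.2.le
        calc |c| * |⟪(θ : EuclideanSpace ℝ (Fin (m+1))), e⟫| ≤ 1 * 1 :=
          mul_le_mul hcabs ht (abs_nonneg _) zero_le_one
        _ = 1 := one_mul 1
      exact abs_le.1 this
    · rw [hinner, mul_smul, ← smul_sub, norm_smul, Real.norm_eq_abs, abs_of_pos hc.1]
      calc c * ‖(θ : EuclideanSpace ℝ (Fin (m+1))) -
            ⟪(θ : EuclideanSpace ℝ (Fin (m+1))), e⟫ • e‖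
          ≤ 1 * ‖(θ : EuclideanSpace ℝ (Fin (m+1))) - e‖ := by
            refine mul_le_mul hc.2.le (proj_norm_le e _ he) (norm_nonneg _) zero_le_one
        _ ≤ r := by rw [one_mul]; exact hθ
  calc volume (Ioo (0:ℝ) 1 • ((↑) '' {θ : sphere (0 : EuclideanSpace ℝ (Fin (m+1))) 1 |
        ‖(θ : EuclideanSpace ℝ (Fin (m+1))) - e‖ ≤ r}))
      ≤ volume {x : EuclideanSpace ℝ (Fin (m+1)) |
          ⟪x, e⟫ ∈ Icc (-1 : ℝ) 1 ∧ ‖x - ⟪x, e⟫ • e‖ ≤ r} := measure_mono hsub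
    _ = ENNReal.ofReal (1 - (-1)) * (ENNReal.ofReal (r ^ m) *
          volume (ball (0 : EuclideanSpace ℝ (Fin m)) 1)) := slab_volume m e he _ _ _ hr
    _ = ENNReal.ofReal 2 * (ENNReal.ofReal (r ^ m) *
          volume (ball (0 : EuclideanSpace ℝ (Fin m)) 1)) := by norm_num

lemma cap_lower (m : ℕ) (e : EuclideanSpace ℝ (Fin (m+1))) (he : ‖e‖ = 1)
    (r : ℝ) (hr0 : 0 < r) (hr2 : r ≤ 2) :
    ENNReal.ofReal (1/4 : ℝ) * (ENNReal.ofReal ((r/8) ^ m) *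
        volume (ball (0 : EuclideanSpace ℝ (Fin m)) 1))
      ≤ sphereM (m+1) {θ : sphere (0 : EuclideanSpace ℝ (Fin (m+1))) 1 |
          ‖(θ : EuclideanSpace ℝ (Fin (m+1))) - e‖ ≤ r} := by
  rw [sphereM, Measure.toSphere_apply' _ (cap_measurable m e r), finrank_euclideanSpace_fin]
  have hsub : {x : EuclideanSpace ℝ (Fin (m+1)) |
        ⟪x, e⟫ ∈ Icc (1/2 : ℝ) (3/4) ∧ ‖x - ⟪x, e⟫ • e‖ ≤ r/8}
      ⊆ Ioo (0:ℝ) 1 • ((↑) '' {θ : sphere (0 : EuclideanSpace ℝ (Fin (m+1))) 1 |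
          ‖(θ : EuclideanSpace ℝ (Fin (m+1))) - e‖ ≤ r}) := by
    rintro x ⟨ht, hu⟩
    set t : ℝ := ⟪x, e⟫ with htdef
    set u : EuclideanSpace ℝ (Fin (m+1)) := x - t • e with hudef
    have horth : ⟪u, e⟫ = 0 := proj_orth e x he
    have hxeq : t • e + u = x := by rw [hudef]; abel
    have hx2 : ‖x‖^2 = t^2 + ‖u‖^2 := by
      have hio : ⟪t • e, u⟫ = 0 := by
        rw [real_inner_smul_left, real_inner_comm, horth, mul_zero]
      have h := norm_add_sq_eq_norm_sq_add_norm_sq_real hio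
      rw [hxeq] at h
      have hte : ‖t • e‖ = |t| := by rw [norm_smul, Real.norm_eq_abs, he, mul_one]
      rw [hte] at h
      rw [sq, sq, sq, h, abs_mul_abs_self]
    set c : ℝ := ‖x‖ with hcdef
    have hc0 : 0 ≤ c := norm_nonneg x
    have hrc : r/8 ≤ 1/4 := by linarith
    have hu0 : 0 ≤ ‖u‖ := norm_nonneg u
    have hclt1 : c < 1 := by nlinarith [ht.1, ht.2]
    have hcge : 1/2 ≤ c := by nlinarith [ht.1, ht.2]
    have hcpos : 0 < c := by linarith
    have hct : t ≤ c := by nlinarith [ht.1]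
    have hctb : c - t ≤ r/32 := by nlinarith [ht.1, hr0.le]
    set θv : EuclideanSpace ℝ (Fin (m+1)) := c⁻¹ • x with hθvdef
    have hθvn : ‖θv‖ = 1 := by
      rw [hθvdef, norm_smul, Real.norm_eq_abs, abs_of_pos (inv_pos.2 hcpos), ← hcdef,
        inv_mul_cancel₀ hcpos.ne']
    have hxce : ‖x - c • e‖ ≤ r/32 + r/8 := by
      have hdec : (t - c) • e + u = x - c • e := by
        rw [hudef, sub_smul]; abel
      calc ‖x - c • e‖ = ‖(t - c) • e + u‖ := by rw [hdec]
        _ ≤ ‖(t - c) • e‖ + ‖u‖ := norm_add_le _ _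
        _ ≤ r/32 + r/8 := by
            rw [norm_smul, Real.norm_eq_abs, he, mul_one, abs_of_nonpos (by linarith)]
            have : -(t - c) ≤ r/32 := by linarith
            linarith
    have hcap : ‖θv - e‖ ≤ r := by
      have hrewr : θv - e = c⁻¹ • (x - c • e) := by
        rw [hθvdef, smul_sub, smul_smul, inv_mul_cancel₀ hcpos.ne', one_smul]
      have hcinv : c⁻¹ ≤ 2 := by
        rw [show (2:ℝ) = (1/2)⁻¹ by norm_num]
        exact inv_anti₀ (by norm_num) hcge
      rw [hrewr, norm_smul, Real.norm_eq_abs, abs_of_pos (inv_pos.2 hcpos)]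
      calc c⁻¹ * ‖x - c • e‖ ≤ 2 * (r/32 + r/8) :=
          mul_le_mul hcinv hxce (norm_nonneg _) (by norm_num)
        _ ≤ r := by linarith
    rw [Set.mem_smul]
    refine ⟨c, ⟨hcpos, hclt1⟩, θv, ?_, ?_⟩
    · exact Set.mem_image_of_mem _
        (show (⟨θv, mem_sphere_zero_iff_norm.2 hθvn⟩ :
            sphere (0 : EuclideanSpace ℝ (Fin (m+1))) 1) ∈
          {θ : sphere (0 : EuclideanSpace ℝ (Fin (m+1))) 1 |
            ‖(θ : EuclideanSpace ℝ (Fin (m+1))) - e‖ ≤ r} from hcap)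
    · rw [hθvdef, smul_smul, mul_inv_cancel₀ hcpos.ne', one_smul]
  calc ENNReal.ofReal (1/4 : ℝ) * (ENNReal.ofReal ((r/8) ^ m) *
        volume (ball (0 : EuclideanSpace ℝ (Fin m)) 1))
      = ENNReal.ofReal ((3/4 : ℝ) - 1/2) * (ENNReal.ofReal ((r/8) ^ m) *
        volume (ball (0 : EuclideanSpace ℝ (Fin m)) 1)) := by norm_num
    _ = volume {x : EuclideanSpace ℝ (Fin (m+1)) |
          ⟪x, e⟫ ∈ Icc (1/2 : ℝ) (3/4) ∧ ‖x - ⟪x, e⟫ • e‖ ≤ r/8} :=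
        (slab_volume m e he _ _ _ (by positivity)).symm
    _ ≤ volume (Ioo (0:ℝ) 1 • (Subtype.val '' {θ : sphere (0 : EuclideanSpace ℝ (Fin (m+1))) 1 |
          ‖(θ : EuclideanSpace ℝ (Fin (m+1))) - e‖ ≤ r})) := measure_mono hsub
    _ ≤ ((m+1 : ℕ) : ℝ≥0∞) * volume (Ioo (0:ℝ) 1 • (Subtype.val ''
          {θ : sphere (0 : EuclideanSpace ℝ (Fin (m+1))) 1 |
            ‖(θ : EuclideanSpace ℝ (Fin (m+1))) - e‖ ≤ r})) := by
        refine le_mul_of_one_le_left zero_le ?_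
        simp

/-- Two-sided estimate `∫_{S^{n-1}} |ρe - θ|^{-n} dS(θ) ≃ |1-ρ|⁻¹` for `ρ ∈ [1/2,2]`, `ρ ≠ 1`. -/
theorem sphere_kernel_integral_comparable
    (n : ℕ) (hn : 2 ≤ n) (e : EuclideanSpace ℝ (Fin n)) (he : ‖e‖ = 1) :
    ∃ c C : ℝ, 0 < c ∧ 0 < C ∧
      ∀ ρ : ℝ, ρ ∈ Icc (1 / 2 : ℝ) 2 → ρ ≠ 1 →
        c / |1 - ρ| ≤
            (∫ θ, (‖ρ • e - (θ : EuclideanSpace ℝ (Fin n))‖ ^ n)⁻¹ ∂(sphereM n)) ∧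
          (∫ θ, (‖ρ • e - (θ : EuclideanSpace ℝ (Fin n))‖ ^ n)⁻¹ ∂(sphereM n)) ≤
            C / |1 - ρ| := by
  obtain ⟨m, rfl⟩ : ∃ m, n = m + 1 := ⟨n - 1, by omega⟩
  set B := volume (ball (0 : EuclideanSpace ℝ (Fin m)) 1) with hB
  have hBpos : 0 < B := measure_ball_pos _ _ one_pos
  have hBfin : B ≠ ⊤ := measure_ball_lt_top.ne
  set Bt : ℝ := B.toReal with hBt
  have hBtpos : 0 < Bt := ENNReal.toReal_pos hBpos.ne' hBfin
  set K2 : ℝ≥0∞ := ((m+1:ℕ) : ℝ≥0∞) * (ENNReal.ofReal 2 *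
      (ENNReal.ofReal ((2:ℝ)^m) * B)) with hK2
  have hK2top : K2 ≠ ⊤ := by
    refine ENNReal.mul_ne_top (ENNReal.natCast_ne_top _) ?_
    exact ENNReal.mul_ne_top ENNReal.ofReal_ne_top
      (ENNReal.mul_ne_top ENNReal.ofReal_ne_top hBfin)
  have hK2ne : K2 ≠ 0 := by
    refine mul_ne_zero (by positivity) (mul_ne_zero ?_ (mul_ne_zero ?_ hBpos.ne'))
    · simp
    · simp [ENNReal.ofReal_eq_zero, not_le]
  set c : ℝ := (1/4) * Bt / (8^m * 2^(m+1)) with hc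
  set C : ℝ := K2.toReal * ((m+1:ℕ) : ℝ) with hC
  have hcpos : 0 < c := by positivity
  have hCpos : 0 < C := by
    have := ENNReal.toReal_pos hK2ne hK2top
    positivity
  refine ⟨c, C, hcpos, hCpos, fun ρ hρ hρ1 => ?_⟩
  set δ : ℝ := |1 - ρ| with hδ
  have hδ0 : 0 < δ := abs_pos.2 (sub_ne_zero.2 (Ne.symm hρ1))
  have hδ1 : δ ≤ 1 := abs_le.2 ⟨by linarith [hρ.2], by linarith [hρ.1]⟩
  have hρpos : 0 < ρ := by linarith [hρ.1]
  set f : sphere (0 : EuclideanSpace ℝ (Fin (m+1))) 1 → ℝ :=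
    fun θ => (‖ρ • e - (θ : EuclideanSpace ℝ (Fin (m+1)))‖ ^ (m+1))⁻¹ with hf
  have hρe : ‖ρ • e‖ = ρ := by
    rw [norm_smul, Real.norm_eq_abs, abs_of_pos hρpos, he, mul_one]
  have hρee : ‖ρ • e - e‖ = δ := by
    have : ρ • e - e = (ρ - 1) • e := by rw [sub_smul, one_smul]
    rw [this, norm_smul, Real.norm_eq_abs, he, mul_one, abs_sub_comm]
  have hlb : ∀ θ : sphere (0 : EuclideanSpace ℝ (Fin (m+1))) 1,
      δ ≤ ‖ρ • e - (θ : EuclideanSpace ℝ (Fin (m+1)))‖ := by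
    intro θ
    have hθn : ‖(θ : EuclideanSpace ℝ (Fin (m+1)))‖ = 1 := mem_sphere_zero_iff_norm.1 θ.2
    have h := abs_norm_sub_norm_le (ρ • e) (θ : EuclideanSpace ℝ (Fin (m+1)))
    rw [hρe, hθn] at h
    calc δ = |ρ - 1| := abs_sub_comm 1 ρ
      _ ≤ ‖ρ • e - (θ : EuclideanSpace ℝ (Fin (m+1)))‖ := h
  have hXpos : ∀ θ : sphere (0 : EuclideanSpace ℝ (Fin (m+1))) 1,
      0 < ‖ρ • e - (θ : EuclideanSpace ℝ (Fin (m+1)))‖ := fun θ => lt_of_lt_of_le hδ0 (hlb θ)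
  have hfpos : ∀ θ, 0 < f θ := fun θ =>
    inv_pos.2 (pow_pos (hXpos θ) _)
  set A : ℝ := (δ⁻¹)^(m+1) with hA
  have hA0 : 0 < A := by positivity
  have hfub : ∀ θ, f θ ≤ A := by
    intro θ
    have h1 : ‖ρ • e - (θ : EuclideanSpace ℝ (Fin (m+1)))‖⁻¹ ≤ δ⁻¹ :=
      inv_anti₀ hδ0 (hlb θ)
    calc f θ = (‖ρ • e - (θ : EuclideanSpace ℝ (Fin (m+1)))‖⁻¹)^(m+1) := by
          rw [hf, inv_pow]
      _ ≤ (δ⁻¹)^(m+1) := pow_le_pow_left₀ (by positivity) h1 _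
      _ = A := by rw [hA]
  have hcont : Continuous f := by
    rw [hf]
    refine Continuous.inv₀ (Continuous.pow ?_ _) fun θ => (pow_pos (hXpos θ) _).ne'
    exact (continuous_const.sub continuous_subtype_val).norm
  have hfint : Integrable f (sphereM (m+1)) := by
    refine Integrable.mono' (integrable_const A) hcont.aestronglyMeasurable
      (ae_of_all _ fun θ => ?_)
    rw [Real.norm_eq_abs, abs_of_pos (hfpos θ)]
    exact hfub θ
  have hInt_repr : (∫ θ, f θ ∂(sphereM (m+1)))
      = (∫⁻ θ, ENNReal.ofReal (f θ) ∂(sphereM (m+1))).toReal :=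
    integral_eq_lintegral_of_nonneg_ae (ae_of_all _ fun θ => (hfpos θ).le)
      hcont.aestronglyMeasurable
  constructor
  · -- lower bound
    set cap := {θ : sphere (0 : EuclideanSpace ℝ (Fin (m+1))) 1 |
        ‖(θ : EuclideanSpace ℝ (Fin (m+1))) - e‖ ≤ δ} with hcap
    have hσcap : ENNReal.ofReal (1/4 : ℝ) * (ENNReal.ofReal ((δ/8) ^ m) * B)
        ≤ sphereM (m+1) cap := cap_lower m e he δ hδ0 (by linarith)
    have hcapfin : sphereM (m+1) cap ≠ ⊤ := measure_ne_top _ _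
    have htoReal : (1/4 : ℝ) * ((δ/8)^m * Bt) ≤ (sphereM (m+1) cap).toReal := by
      have := ENNReal.toReal_mono hcapfin hσcap
      rwa [ENNReal.toReal_mul, ENNReal.toReal_mul, ENNReal.toReal_ofReal (by norm_num),
        ENNReal.toReal_ofReal (by positivity)] at this
    have hptw : ∀ θ ∈ cap, ((2*δ)^(m+1))⁻¹ ≤ f θ := by
      intro θ hθ
      have hub : ‖ρ • e - (θ : EuclideanSpace ℝ (Fin (m+1)))‖ ≤ 2*δ := by
        have h1 : ‖ρ • e - (θ : EuclideanSpace ℝ (Fin (m+1)))‖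
            ≤ ‖ρ • e - e‖ + ‖e - (θ : EuclideanSpace ℝ (Fin (m+1)))‖ := by
          have := dist_triangle (ρ • e) e (θ : EuclideanSpace ℝ (Fin (m+1)))
          simpa [dist_eq_norm] using this
        have h2 : ‖e - (θ : EuclideanSpace ℝ (Fin (m+1)))‖ ≤ δ := by
          rw [norm_sub_rev]; exact hθ
        rw [hρee] at h1
        linarith
      rw [hf]
      exact inv_anti₀ (pow_pos (hXpos θ) _) (pow_le_pow_left₀ (norm_nonneg _) hub _)
    have hstep : ((2*δ)^(m+1))⁻¹ * (sphereM (m+1) cap).toReal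
        ≤ ∫ θ in cap, f θ ∂(sphereM (m+1)) := by
      have hconst : ∫ _ in cap, ((2*δ)^(m+1))⁻¹ ∂(sphereM (m+1))
          = (sphereM (m+1) cap).toReal * ((2*δ)^(m+1))⁻¹ := by
        rw [setIntegral_const]; rw [smul_eq_mul]; rfl
      calc ((2*δ)^(m+1))⁻¹ * (sphereM (m+1) cap).toReal
          = ∫ _ in cap, ((2*δ)^(m+1))⁻¹ ∂(sphereM (m+1)) := by rw [hconst, mul_comm]
        _ ≤ ∫ θ in cap, f θ ∂(sphereM (m+1)) :=
            setIntegral_mono_on (integrableOn_const (measure_ne_top _ _))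
              hfint.integrableOn (cap_measurable m e δ) hptw
    have htot : ∫ θ in cap, f θ ∂(sphereM (m+1)) ≤ ∫ θ, f θ ∂(sphereM (m+1)) :=
      setIntegral_le_integral hfint (ae_of_all _ fun θ => (hfpos θ).le)
    have hchain : ((2*δ)^(m+1))⁻¹ * ((1/4 : ℝ) * ((δ/8)^m * Bt))
        ≤ ∫ θ, f θ ∂(sphereM (m+1)) := by
      calc ((2*δ)^(m+1))⁻¹ * ((1/4 : ℝ) * ((δ/8)^m * Bt))
          ≤ ((2*δ)^(m+1))⁻¹ * (sphereM (m+1) cap).toReal := by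
            exact mul_le_mul_of_nonneg_left htoReal (by positivity)
        _ ≤ ∫ θ in cap, f θ ∂(sphereM (m+1)) := hstep
        _ ≤ _ := htot
    have harith : c / δ = ((2*δ)^(m+1))⁻¹ * ((1/4 : ℝ) * ((δ/8)^m * Bt)) := by
      rw [hc]
      rw [mul_pow, div_pow]
      field_simp
      ring
    rw [harith]
    exact hchain
  · -- upper bound
    set β : ℝ := -((((m+1:ℕ)):ℝ)⁻¹ * (m:ℝ)) with hβdef
    have hm1pos : (0:ℝ) < ((m+1:ℕ):ℝ) := by positivity
    have hβ : (-1:ℝ) < β := by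
      rw [hβdef, neg_lt, neg_neg, inv_mul_eq_div, div_lt_one hm1pos]
      push_cast
      linarith
    have hβ1 : β + 1 = (((m+1:ℕ)):ℝ)⁻¹ := by
      rw [hβdef]
      have hcast : ((m+1:ℕ):ℝ) = (m:ℝ)+1 := by push_cast; ring
      rw [hcast]
      have hne : (m:ℝ)+1 ≠ 0 := by positivity
      field_simp
      ring
    have hL := lintegral_eq_lintegral_meas_lt (sphereM (m+1))
      (ae_of_all _ fun θ => (hfpos θ).le) hcont.aemeasurable
    set g : ℝ → ℝ≥0∞ :=
      (Ioc (0:ℝ) A).indicator (fun t => K2 * ENNReal.ofReal (t ^ β)) with hg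
    have hgmble : Measurable g := by
      refine Measurable.indicator ?_ measurableSet_Ioc
      fun_prop
    have hbound : ∀ t ∈ Ioi (0:ℝ), sphereM (m+1) {θ | t < f θ} ≤ g t := by
      intro t ht
      rw [mem_Ioi] at ht
      by_cases hA' : t ≤ A
      · rw [hg, Set.indicator_of_mem (mem_Ioc.2 ⟨ht, hA'⟩)]
        set s : ℝ := t⁻¹ ^ ((((m+1:ℕ)):ℝ))⁻¹ with hs
        have hs0 : 0 ≤ s := Real.rpow_nonneg (inv_nonneg.2 ht.le) _
        have hsubset : {θ : sphere (0 : EuclideanSpace ℝ (Fin (m+1))) 1 | t < f θ}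
            ⊆ {θ : sphere (0 : EuclideanSpace ℝ (Fin (m+1))) 1 |
                ‖(θ : EuclideanSpace ℝ (Fin (m+1))) - e‖ ≤ 2*s} := by
          intro θ hθ
          have hθ' : t < (‖ρ • e - (θ : EuclideanSpace ℝ (Fin (m+1)))‖ ^ (m+1))⁻¹ := hθ
          have hXpow : ‖ρ • e - (θ : EuclideanSpace ℝ (Fin (m+1)))‖ ^ (m+1) < t⁻¹ :=
            (lt_inv_comm₀ ht (pow_pos (hXpos θ) _)).1 hθ'
          have hXs : ‖ρ • e - (θ : EuclideanSpace ℝ (Fin (m+1)))‖ < s := by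
            by_contra hge
            push_neg at hge
            have hpow : s ^ (m+1) ≤ ‖ρ • e - (θ : EuclideanSpace ℝ (Fin (m+1)))‖ ^ (m+1) :=
              pow_le_pow_left₀ hs0 hge _
            rw [hs, Real.rpow_inv_natCast_pow (inv_nonneg.2 ht.le) (Nat.succ_ne_zero m)]
              at hpow
            exact absurd hXpow (not_lt.2 hpow)
          show ‖(θ : EuclideanSpace ℝ (Fin (m+1))) - e‖ ≤ 2*s
          have htri := dist_triangle (θ : EuclideanSpace ℝ (Fin (m+1))) (ρ • e) e
          rw [dist_eq_norm, dist_eq_norm, dist_eq_norm] at htri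
          have hrev : ‖(θ : EuclideanSpace ℝ (Fin (m+1))) - ρ • e‖
              = ‖ρ • e - (θ : EuclideanSpace ℝ (Fin (m+1)))‖ := norm_sub_rev _ _
          rw [hrev, hρee] at htri
          have hδX : δ ≤ ‖ρ • e - (θ : EuclideanSpace ℝ (Fin (m+1)))‖ := hlb θ
          linarith
        have hsm : s ^ m = t ^ β := by
          rw [hs, ← Real.rpow_natCast (t⁻¹ ^ ((((m+1:ℕ)):ℝ))⁻¹) m,
            ← Real.rpow_mul (inv_nonneg.2 ht.le), Real.inv_rpow ht.le,
            ← Real.rpow_neg ht.le, hβdef]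
        calc sphereM (m+1) {θ | t < f θ}
            ≤ sphereM (m+1) {θ : sphere (0 : EuclideanSpace ℝ (Fin (m+1))) 1 |
                ‖(θ : EuclideanSpace ℝ (Fin (m+1))) - e‖ ≤ 2*s} := measure_mono hsubset
          _ ≤ ((m+1:ℕ) : ℝ≥0∞) * (ENNReal.ofReal 2 *
                (ENNReal.ofReal ((2*s) ^ m) * B)) := cap_upper m e he (2*s) (by positivity)
          _ = K2 * ENNReal.ofReal (t ^ β) := by
              rw [mul_pow, hsm, ENNReal.ofReal_mul (by positivity), hK2]
              ring
      · rw [hg, Set.indicator_of_notMem (fun hmem => hA' hmem.2)]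
        have hempty : {θ : sphere (0 : EuclideanSpace ℝ (Fin (m+1))) 1 | t < f θ} = ∅ := by
          ext θ
          simp only [mem_setOf_eq, mem_empty_iff_false, iff_false, not_lt]
          exact le_trans (hfub θ) (not_le.1 hA').le
        simp [hempty]
    have hIoc : IntegrableOn (fun t : ℝ => t ^ β) (Ioc 0 A) volume :=
      (intervalIntegral.intervalIntegrable_rpow' hβ).1
    have hIocnn : 0 ≤ᵐ[volume.restrict (Ioc (0:ℝ) A)] fun t : ℝ => t ^ β := by
      filter_upwards [ae_restrict_mem measurableSet_Ioc] with t ht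
      exact Real.rpow_nonneg ht.1.le β
    have hval : ∫ t in Ioc (0:ℝ) A, t ^ β = δ⁻¹ * ((m+1:ℕ) : ℝ) := by
      rw [← intervalIntegral.integral_of_le hA0.le, integral_rpow (Or.inl hβ), hβ1,
        Real.zero_rpow (by positivity), hA,
        Real.pow_rpow_inv_natCast (inv_nonneg.2 hδ0.le) (Nat.succ_ne_zero m),
        sub_zero, div_eq_mul_inv, inv_inv]
    have hLtot : ∫⁻ θ, ENNReal.ofReal (f θ) ∂(sphereM (m+1))
        ≤ K2 * ENNReal.ofReal (δ⁻¹ * ((m+1:ℕ) : ℝ)) := by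
      rw [hL]
      calc ∫⁻ t in Ioi (0:ℝ), sphereM (m+1) {θ | t < f θ}
          ≤ ∫⁻ t in Ioi (0:ℝ), g t := setLIntegral_mono hgmble hbound
        _ ≤ ∫⁻ t, g t := setLIntegral_le_lintegral _ _
        _ = ∫⁻ t in Ioc (0:ℝ) A, K2 * ENNReal.ofReal (t ^ β) := by
            rw [hg, lintegral_indicator measurableSet_Ioc]
        _ = K2 * ∫⁻ t in Ioc (0:ℝ) A, ENNReal.ofReal (t ^ β) :=
            lintegral_const_mul' _ _ hK2top
        _ = K2 * ENNReal.ofReal (δ⁻¹ * ((m+1:ℕ) : ℝ)) := by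
            rw [← ofReal_integral_eq_lintegral_ofReal hIoc hIocnn, hval]
    rw [hInt_repr]
    have hRfin : K2 * ENNReal.ofReal (δ⁻¹ * ((m+1:ℕ) : ℝ)) ≠ ⊤ :=
      ENNReal.mul_ne_top hK2top ENNReal.ofReal_ne_top
    have h1 := ENNReal.toReal_mono hRfin hLtot
    rw [ENNReal.toReal_mul, ENNReal.toReal_ofReal (by positivity)] at h1
    have harith2 : K2.toReal * (δ⁻¹ * ((m+1:ℕ) : ℝ)) = C / δ := by
      rw [hC]
      field_simp
    rw [← harith2]
    exact h1
end
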